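/- Let k, l ≥ 1 and r ≥ 1 be integers. There exist rational numbers b_0, …, b_{r−1} such that for all holomorphic f, g : ℍ → ℂ one has R_k^r(f)·g = C(k+l+2r−2, r)^{−1}·[f,g]_r + R_{k+l+2r−2}( Σ_{s=0}^{r−1} b_s · R_k^s(f) · R_l^{r−1−s}(g) ). -/

import Mathlib

noncomputable section

open Complex Real

/-- The upper half-plane, as a subset of `ℂ`. -/
def UHP : Set ℂ := {z : ℂ | 0 < z.im}

/-- `e(z) = exp(2πiz)`. -/
def e (z : ℂ) : ℂ := Complex.exp (2 * (π : ℂ) * I * z)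

/-- The Wirtinger derivative `∂f/∂τ = (1/2)(∂f/∂x − i ∂f/∂y)`. -/
def dtau (f : ℂ → ℂ) (z : ℂ) : ℂ := (fderiv ℝ f z 1 - I * fderiv ℝ f z I) / 2

/-- The raising operator `R_w f = (1/(2πi)) (∂f/∂τ + w f/(τ − τ̄))`. -/
def Rop (w : ℤ) (f : ℂ → ℂ) : ℂ → ℂ :=
  fun z => (1 / (2 * (π : ℂ) * I)) * (dtau f z + (w : ℂ) * f z / (z - (starRingEnd ℂ) z))

/-- Iterated raising operator: `R_w^0 = id`, `R_w^{n+1} = R_{w+2n} ∘ R_w^n`. -/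
def Riter (w : ℤ) : ℕ → (ℂ → ℂ) → (ℂ → ℂ)
  | 0 => fun f => f
  | n + 1 => fun f => Rop (w + 2 * n) (Riter w n f)

/-- Normalized derivative `f^{(r)} = (2πi)^{−r} d^r f/dτ^r`. -/
def fder (r : ℕ) (f : ℂ → ℂ) : ℂ → ℂ :=
  fun z => ((2 * (π : ℂ) * I) ^ r)⁻¹ * iteratedDeriv r f z

/-- The Rankin–Cohen bracket of `f` and `g` with weight parameters `k`, `l`:
`[f,g]_r = Σ_{s=0}^r (−1)^s C(k+r−1,s) C(l+r−1,r−s) f^{(r−s)} g^{(s)}`. -/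
def RCbracket (k l r : ℕ) (f g : ℂ → ℂ) : ℂ → ℂ :=
  fun z => ∑ s ∈ Finset.range (r + 1),
    (-1 : ℂ) ^ s * (Nat.choose (k + r - 1) s : ℂ) * (Nat.choose (l + r - 1) (r - s) : ℂ) *
      fder (r - s) f z * fder s g z

lemma isOpen_UHP : IsOpen UHP := isOpen_lt continuous_const Complex.continuous_im

lemma UHP_nhds {τ : ℂ} (hτ : τ ∈ UHP) : UHP ∈ nhds τ := isOpen_UHP.mem_nhds hτ

lemma twoPiI_ne : (2 * (π : ℂ) * I) ≠ 0 := by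
  simp [Real.pi_ne_zero, I_ne_zero]

lemma sub_conj_ne {τ : ℂ} (hτ : τ ∈ UHP) : τ - (starRingEnd ℂ) τ ≠ 0 := by
  rw [Complex.sub_conj]
  simp [Complex.ext_iff, I_ne_zero]
  exact fun h => absurd h (ne_of_gt hτ)

lemma fderiv_holo_apply {h : ℂ → ℂ} {τ : ℂ} (hh : DifferentiableAt ℂ h τ) (w : ℂ) :
    fderiv ℝ h τ w = deriv h τ * w := by
  rw [hh.fderiv_restrictScalars ℝ]
  have : fderiv ℂ h τ w = w • fderiv ℂ h τ 1 := by
    rw [← (fderiv ℂ h τ).map_smul w 1]; simp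
  simp only [ContinuousLinearMap.coe_restrictScalars', this]
  simp only [deriv, smul_eq_mul]
  ring

lemma dtau_holo {h : ℂ → ℂ} {τ : ℂ} (hh : DifferentiableAt ℂ h τ) : dtau h τ = deriv h τ := by
  unfold dtau
  rw [fderiv_holo_apply hh, fderiv_holo_apply hh]
  have : (I:ℂ)^2 = -1 := Complex.I_sq
  field_simp
  linear_combination (-(deriv h τ)/1) * this

lemma dtau_congr {F G : ℂ → ℂ} {τ : ℂ} (h : F =ᶠ[nhds τ] G) : dtau F τ = dtau G τ := by
  unfold dtau; rw [h.fderiv_eq]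

lemma dtau_const_mul {F : ℂ → ℂ} {τ : ℂ} (c : ℂ) (hF : DifferentiableAt ℝ F τ) :
    dtau (fun z => c * F z) τ = c * dtau F τ := by
  unfold dtau
  rw [fderiv_const_mul hF c]
  simp only [ContinuousLinearMap.smul_apply, smul_eq_mul]
  ring

lemma dtau_mul {F G : ℂ → ℂ} {τ : ℂ} (hF : DifferentiableAt ℝ F τ)
    (hG : DifferentiableAt ℝ G τ) :
    dtau (fun z => F z * G z) τ = dtau F τ * G τ + F τ * dtau G τ := by
  unfold dtau
  rw [fderiv_fun_mul hF hG]
  simp only [ContinuousLinearMap.add_apply, ContinuousLinearMap.smul_apply, smul_eq_mul]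
  ring

lemma dtau_sum {ι : Type*} {s : Finset ι} {u : ι → ℂ → ℂ} {τ : ℂ}
    (hu : ∀ a ∈ s, DifferentiableAt ℝ (u a) τ) :
    dtau (fun z => ∑ a ∈ s, u a z) τ = ∑ a ∈ s, dtau (u a) τ := by
  unfold dtau
  rw [fderiv_fun_sum hu]
  simp only [ContinuousLinearMap.coe_sum', Finset.sum_apply, Finset.mul_sum,
    ← Finset.sum_sub_distrib, Finset.sum_div]

lemma diff_conj {τ : ℂ} : DifferentiableAt ℝ (fun z : ℂ => (starRingEnd ℂ) z) τ :=
  Complex.conjCLE.differentiableAt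

lemma dtau_sub_conj (τ : ℂ) : dtau (fun z => z - (starRingEnd ℂ) z) τ = 1 := by
  unfold dtau
  rw [fderiv_fun_sub differentiableAt_fun_id diff_conj]
  have h1 : fderiv ℝ (fun z : ℂ => (starRingEnd ℂ) z) τ = Complex.conjCLE.toContinuousLinearMap := by
    have : (fun z : ℂ => (starRingEnd ℂ) z) = ⇑Complex.conjCLE := by ext z; rfl
    rw [this, ContinuousLinearEquiv.fderiv]
  rw [h1, fderiv_id']
  simp only [ContinuousLinearMap.sub_apply, ContinuousLinearMap.id_apply,
    ContinuousLinearEquiv.coe_coe]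
  have e1 : Complex.conjCLE (1:ℂ) = 1 := by simp
  have e2 : Complex.conjCLE I = -I := by simp
  rw [e1, e2]
  have : (I:ℂ)^2 = -1 := Complex.I_sq
  ring_nf
  linear_combination -this

lemma dtau_comp {g c : ℂ → ℂ} {τ : ℂ} (hg : DifferentiableAt ℂ g (c τ))
    (hc : DifferentiableAt ℝ c τ) :
    dtau (fun z => g (c z)) τ = deriv g (c τ) * dtau c τ := by
  have hcomp : fderiv ℝ (g ∘ c) τ = (fderiv ℝ g (c τ)).comp (fderiv ℝ c τ) :=
    fderiv_comp τ (hg.restrictScalars ℝ) hc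
  have key : ∀ w : ℂ, fderiv ℝ g (c τ) w = deriv g (c τ) * w := by
    intro w
    rw [hg.fderiv_restrictScalars ℝ]
    have : fderiv ℂ g (c τ) w = w • fderiv ℂ g (c τ) 1 := by
      rw [← (fderiv ℂ g (c τ)).map_smul w 1]; simp
    simp only [ContinuousLinearMap.coe_restrictScalars', this, deriv, smul_eq_mul]
    ring
  show dtau (g ∘ c) τ = _
  unfold dtau
  rw [hcomp]
  simp only [ContinuousLinearMap.comp_apply, key]
  ring

def vv (z : ℂ) : ℂ := (2 * (π : ℂ) * I * (z - (starRingEnd ℂ) z))⁻¹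

lemma diff_lin {τ : ℂ} : DifferentiableAt ℝ (fun z : ℂ => 2 * (π:ℂ) * I * (z - (starRingEnd ℂ) z)) τ :=
  ((differentiableAt_fun_id.fun_sub diff_conj)).const_mul _

lemma twoPiI_ne' : (2 * (π : ℂ) * I) ≠ 0 := by simp [Real.pi_ne_zero, I_ne_zero]

lemma sub_conj_ne' {τ : ℂ} (hτ : τ ∈ UHP) : τ - (starRingEnd ℂ) τ ≠ 0 := by
  rw [Complex.sub_conj]
  simp [Complex.ext_iff, I_ne_zero]
  exact fun h => absurd h (ne_of_gt hτ)

lemma vv_ne {τ : ℂ} (hτ : τ ∈ UHP) : vv τ ≠ 0 := by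
  unfold vv
  exact inv_ne_zero (mul_ne_zero twoPiI_ne' (sub_conj_ne' hτ))

lemma diff_vv {τ : ℂ} (hτ : τ ∈ UHP) : DifferentiableAt ℝ vv τ :=
  diff_lin.inv (mul_ne_zero twoPiI_ne' (sub_conj_ne' hτ))

lemma dtau_sub_conj' (τ : ℂ) : dtau (fun z => z - (starRingEnd ℂ) z) τ = 1 := dtau_sub_conj τ

lemma dtau_vv {τ : ℂ} (hτ : τ ∈ UHP) : dtau vv τ = -(2 * (π:ℂ) * I) * vv τ ^ 2 := by
  have hne : 2 * (π:ℂ) * I * (τ - (starRingEnd ℂ) τ) ≠ 0 :=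
    mul_ne_zero twoPiI_ne' (sub_conj_ne' hτ)
  have h1 : dtau (fun z : ℂ => 2 * (π:ℂ) * I * (z - (starRingEnd ℂ) z)) τ = 2 * (π:ℂ) * I := by
    rw [dtau_const_mul _ (differentiableAt_fun_id.fun_sub diff_conj), dtau_sub_conj τ, mul_one]
  have := dtau_comp (g := fun w : ℂ => w⁻¹)
    (c := fun z : ℂ => 2 * (π:ℂ) * I * (z - (starRingEnd ℂ) z)) (τ := τ)
    (differentiableAt_inv hne) diff_lin
  rw [h1] at this
  have hd : deriv (fun w : ℂ => w⁻¹) (2 * (π:ℂ) * I * (τ - (starRingEnd ℂ) τ))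
      = -(2 * (π:ℂ) * I * (τ - (starRingEnd ℂ) τ))⁻¹ ^ 2 := by
    rw [deriv_inv]
    rw [inv_pow]
  rw [hd] at this
  show dtau vv τ = _
  unfold vv
  rw [this]
  ring

lemma Rop_eq {w : ℤ} {F : ℂ → ℂ} {τ : ℂ} (hτ : τ ∈ UHP) :
    Rop w F τ = (2 * (π:ℂ) * I)⁻¹ * dtau F τ + (w : ℂ) * vv τ * F τ := by
  unfold Rop vv
  have h1 := twoPiI_ne'
  have h2 := sub_conj_ne' hτ
  field_simp

lemma Rop_congr {w : ℤ} {F G : ℂ → ℂ} {τ : ℂ} (h : F =ᶠ[nhds τ] G) : Rop w F τ = Rop w G τ := by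
  unfold Rop
  rw [dtau_congr h, h.eq_of_nhds]

lemma Rop_mul (w1 w2 : ℤ) {F G : ℂ → ℂ} {τ : ℂ} (hF : DifferentiableAt ℝ F τ)
    (hG : DifferentiableAt ℝ G τ) :
    Rop (w1 + w2) (fun z => F z * G z) τ = Rop w1 F τ * G τ + F τ * Rop w2 G τ := by
  unfold Rop
  rw [dtau_mul hF hG]
  push_cast
  simp only [div_eq_mul_inv]
  ring

lemma dtau_vh {τ : ℂ} (hτ : τ ∈ UHP) (m : ℕ) {h : ℂ → ℂ} (hh : DifferentiableAt ℂ h τ) :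
    dtau (fun z => vv z ^ m * h z) τ
      = -(2 * (π:ℂ) * I) * m * vv τ ^ (m + 1) * h τ + vv τ ^ m * deriv h τ := by
  induction m with
  | zero =>
      have e0 : dtau (fun z => vv z ^ 0 * h z) τ = deriv h τ := by
        rw [show (fun z => vv z ^ 0 * h z) = h by funext z; rw [pow_zero, one_mul]]
        exact dtau_holo hh
      rw [e0]
      push_cast
      ring
  | succ m ih =>
      have hdm : DifferentiableAt ℝ (fun z => vv z ^ m * h z) τ :=
        ((diff_vv hτ).pow m).mul (hh.restrictScalars ℝ)
      have : dtau (fun z => vv z ^ (m+1) * h z) τ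
          = dtau vv τ * (vv τ ^ m * h τ) + vv τ * dtau (fun z => vv z ^ m * h z) τ := by
        rw [← dtau_mul (diff_vv hτ) hdm]
        apply dtau_congr
        filter_upwards with z
        ring
      rw [this, ih, dtau_vv hτ]
      push_cast
      ring

lemma Rop_vh {τ : ℂ} (hτ : τ ∈ UHP) (w : ℤ) (m : ℕ) {h : ℂ → ℂ} (hh : DifferentiableAt ℂ h τ) :
    Rop w (fun z => vv z ^ m * h z) τ
      = ((w : ℂ) - m) * vv τ ^ (m + 1) * h τ
        + vv τ ^ m * ((2 * (π:ℂ) * I)⁻¹ * deriv h τ) := by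
  rw [Rop_eq hτ, dtau_vh hτ m hh]
  have h2 : (2 * (π:ℂ) * I)⁻¹ * (2 * (π:ℂ) * I) = 1 := inv_mul_cancel₀ twoPiI_ne'
  linear_combination (-(m:ℂ) * vv τ ^ (m + 1) * h τ) * h2

lemma Rop_sum {ι : Type*} {w : ℤ} {s : Finset ι} {u : ι → ℂ → ℂ} {τ : ℂ}
    (hu : ∀ a ∈ s, DifferentiableAt ℝ (u a) τ) :
    Rop w (fun z => ∑ a ∈ s, u a z) τ = ∑ a ∈ s, Rop w (u a) τ := by
  unfold Rop
  rw [dtau_sum hu]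
  simp only [Finset.mul_sum, Finset.sum_div, ← Finset.sum_add_distrib]

lemma Rop_const_mul {w : ℤ} (c : ℂ) {F : ℂ → ℂ} {τ : ℂ} (hF : DifferentiableAt ℝ F τ) :
    Rop w (fun z => c * F z) τ = c * Rop w F τ := by
  unfold Rop
  rw [dtau_const_mul c hF]
  simp only [div_eq_mul_inv]
  ring

lemma analytic_iterd {f : ℂ → ℂ} (hf : DifferentiableOn ℂ f UHP) :
    ∀ j, AnalyticOnNhd ℂ (iteratedDeriv j f) UHP
  | 0 => by simpa [iteratedDeriv_zero] using hf.analyticOnNhd isOpen_UHP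
  | j + 1 => by
      rw [iteratedDeriv_succ]
      exact (analytic_iterd hf j).deriv

lemma iterd_diffC {f : ℂ → ℂ} (hf : DifferentiableOn ℂ f UHP) (j : ℕ) {τ : ℂ} (hτ : τ ∈ UHP) :
    DifferentiableAt ℂ (iteratedDeriv j f) τ :=
  (analytic_iterd hf j τ hτ).differentiableAt

lemma fder_diffC {f : ℂ → ℂ} (hf : DifferentiableOn ℂ f UHP) (j : ℕ) {τ : ℂ} (hτ : τ ∈ UHP) :
    DifferentiableAt ℂ (fder j f) τ :=
  (iterd_diffC hf j hτ).const_mul _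

lemma fder_diffR {f : ℂ → ℂ} (hf : DifferentiableOn ℂ f UHP) (j : ℕ) {τ : ℂ} (hτ : τ ∈ UHP) :
    DifferentiableAt ℝ (fder j f) τ :=
  (fder_diffC hf j hτ).restrictScalars ℝ

lemma fder_zero (f : ℂ → ℂ) : fder 0 f = f := by
  funext z; simp [fder, iteratedDeriv_zero]

lemma deriv_fder {f : ℂ → ℂ} (j : ℕ) (τ : ℂ) :
    (2 * (π:ℂ) * I)⁻¹ * deriv (fder j f) τ = fder (j + 1) f τ := by
  unfold fder
  rw [deriv_const_mul_field]
  rw [show deriv (iteratedDeriv j f) τ = iteratedDeriv (j+1) f τ by rw [iteratedDeriv_succ]]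
  rw [pow_succ, mul_inv]
  ring


lemma cast_asc (a m : ℕ) : ((a+1).ascFactorial m : ℚ) = (a+m).factorial / a.factorial := by
  rw [eq_div_iff (by exact_mod_cast a.factorial_ne_zero)]
  rw [mul_comm]
  exact_mod_cast congrArg (Nat.cast (R := ℚ)) (Nat.factorial_mul_ascFactorial a m)

lemma cast_fact_succ (a : ℕ) : ((a+1).factorial : ℚ) = (a+1) * a.factorial := by
  rw [Nat.factorial_succ]; push_cast; ring

lemma natid (K j m : ℕ) :
    (j+m+2).choose (j+1) * (K+j+2).ascFactorial (m+1)
      = (j+m+1).choose (j+1) * (K+j+2).ascFactorial m * (K+2*j+m+3)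
        + (j+m+1).choose j * (K+j+1).ascFactorial (m+1) := by
  apply @Nat.cast_injective ℚ
  push_cast
  rw [show K+j+2 = (K+j+1)+1 from rfl]
  rw [cast_asc (K+j+1) (m+1), cast_asc (K+j+1) m, show K+j+1 = (K+j)+1 from rfl,
    cast_asc (K+j) (m+1)]
  rw [Nat.cast_choose ℚ (show j+1 ≤ j+m+2 by omega),
      Nat.cast_choose ℚ (show j+1 ≤ j+m+1 by omega),
      Nat.cast_choose ℚ (show j ≤ j+m+1 by omega)]
  rw [show j+m+2-(j+1) = m+1 by omega, show j+m+1-(j+1) = m by omega,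
      show j+m+1-j = m+1 by omega]
  rw [show K+j+1+(m+1) = (K+j+m+1)+1 by omega, show K+j+1+m = K+j+m+1 by omega,
      show K+j+(m+1) = K+j+m+1 by omega, show j+m+2 = (j+m+1)+1 by omega]
  rw [cast_fact_succ (j+m+1), cast_fact_succ (K+j+m+1), cast_fact_succ (K+j),
      cast_fact_succ j, cast_fact_succ m]
  have n1 : ((j+m+1).factorial : ℚ) ≠ 0 := by exact_mod_cast (j+m+1).factorial_ne_zero
  have n2 : ((K+j+m+1).factorial : ℚ) ≠ 0 := by exact_mod_cast (K+j+m+1).factorial_ne_zero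
  have n3 : ((K+j).factorial : ℚ) ≠ 0 := by exact_mod_cast (K+j).factorial_ne_zero
  have n4 : ((j).factorial : ℚ) ≠ 0 := by exact_mod_cast (j).factorial_ne_zero
  have n5 : ((m).factorial : ℚ) ≠ 0 := by exact_mod_cast (m).factorial_ne_zero
  field_simp
  push_cast
  ring

lemma star_id (K L j i t u : ℕ) :
    (t+u).factorial * ((K+j+i+t+u).choose (i+t)) * ((L+j+i+t+u).choose (j+u))
        * ((j+u).choose j) * ((K+1+j).ascFactorial u) * ((i+t).choose i)
        * ((L+1+i).ascFactorial t)
      = (t+u).choose t * ((K+j+i+t+u).choose i) * ((L+j+i+t+u).choose j)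
        * ((K+1+j).ascFactorial (t+u)) * ((L+1+i).ascFactorial (t+u)) := by
  apply @Nat.cast_injective ℚ
  push_cast
  rw [show K+1+j = (K+j)+1 by omega, show L+1+i = (L+i)+1 by omega]
  rw [cast_asc (K+j) u, cast_asc (K+j) (t+u), cast_asc (L+i) t, cast_asc (L+i) (t+u)]
  rw [Nat.cast_choose ℚ (show i+t ≤ K+j+i+t+u by omega),
      Nat.cast_choose ℚ (show j+u ≤ L+j+i+t+u by omega),
      Nat.cast_choose ℚ (show j ≤ j+u by omega),
      Nat.cast_choose ℚ (show i ≤ i+t by omega),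
      Nat.cast_choose ℚ (show t ≤ t+u by omega),
      Nat.cast_choose ℚ (show i ≤ K+j+i+t+u by omega),
      Nat.cast_choose ℚ (show j ≤ L+j+i+t+u by omega)]
  rw [show K+j+i+t+u-(i+t) = K+j+u by omega, show L+j+i+t+u-(j+u) = L+i+t by omega,
      show j+u-j = u by omega, show i+t-i = t by omega, show t+u-t = u by omega,
      show K+j+i+t+u-i = K+j+t+u by omega, show L+j+i+t+u-j = L+i+t+u by omega,
      show K+j+(t+u) = K+j+t+u by omega, show L+i+(t+u) = L+i+t+u by omega,
      show K+j+u = K+j+u by rfl, show L+i+t = L+i+t by rfl]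
  have ne : ∀ a : ℕ, ((a.factorial : ℚ)) ≠ 0 := fun a => by exact_mod_cast a.factorial_ne_zero
  field_simp

lemma expand_step (k n : ℕ) (hk : 1 ≤ k) (V : ℂ) (F : ℕ → ℂ) :
    (∑ j ∈ Finset.range (n+1),
      ((n.choose j : ℂ) * (((k+j).ascFactorial (n-j) : ℕ) : ℂ))
        * (((k:ℂ) + 2*(n:ℕ) - ((n-j : ℕ) : ℂ)) * (V ^ ((n-j)+1) * F j) + V ^ (n-j) * F (j+1)))
    = ∑ j ∈ Finset.range (n+2),
      (((n+1).choose j : ℂ) * (((k+j).ascFactorial (n+1-j) : ℕ) : ℂ)) * (V ^ (n+1-j) * F j) := by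
  obtain ⟨K, rfl⟩ : ∃ K, k = K + 1 := ⟨k - 1, by omega⟩
  set A : ℕ → ℂ := fun j => ((n.choose j : ℂ) * (((K+1+j).ascFactorial (n-j) : ℕ) : ℂ))
    * ((((K+1:ℕ):ℂ) + 2*(n:ℕ) - ((n-j : ℕ) : ℂ)) * (V ^ ((n-j)+1) * F j)) with hA
  set B : ℕ → ℂ := fun j => ((n.choose j : ℂ) * (((K+1+j).ascFactorial (n-j) : ℕ) : ℂ))
    * (V ^ (n-j) * F (j+1)) with hB
  set G : ℕ → ℂ := fun j => (((n+1).choose j : ℂ) * (((K+1+j).ascFactorial (n+1-j) : ℕ) : ℂ))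
    * (V ^ (n+1-j) * F j) with hG
  have hA0 : A 0 = G 0 := by
    rw [hA, hG]
    simp only [Nat.choose_zero_right, Nat.cast_one, Nat.sub_zero, Nat.add_zero]
    rw [show (K+1).ascFactorial (n+1) = (K+1+n) * (K+1).ascFactorial n from Nat.ascFactorial_succ]
    push_cast
    ring
  have hAtop : A (n+1) = 0 := by
    rw [hA]
    simp [Nat.choose_succ_self]
  have hkey : ∀ j ∈ Finset.range (n+1), A (j+1) + B j = G (j+1) := by
    intro j hj
    rw [Finset.mem_range] at hj
    rcases Nat.lt_or_ge j n with hlt | hge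
    · obtain ⟨m, rfl⟩ : ∃ m, n = j + m + 1 := ⟨n - j - 1, by omega⟩
      rw [hA, hB, hG]
      simp only
      rw [show j+m+1-(j+1) = m by omega, show j+m+1-j = m+1 by omega,
          show j+m+1+1-(j+1) = m+1 by omega]
      have hcast := congrArg (Nat.cast (R := ℂ)) (natid K j m)
      push_cast at hcast ⊢
      rw [show ((K:ℂ)+1+2*((j:ℂ)+(m:ℂ)+1) - (m:ℂ)) = (K:ℂ)+2*(j:ℂ)+(m:ℂ)+3 by ring]
      rw [show K+1+(j+1) = K+j+2 by omega, show K+1+j = K+j+1 by omega]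
      rw [show j+m+1+1 = j+m+2 by omega]
      linear_combination (-(V ^ (m+1) * F (j+1))) * hcast
    · have hjn : j = n := by omega
      subst hjn
      rw [hA, hB, hG]
      simp only [Nat.choose_succ_self, Nat.cast_zero, zero_mul, Nat.sub_self,
        Nat.choose_self, Nat.succ_sub_one]
      simp [Nat.choose_succ_self]
  calc (∑ j ∈ Finset.range (n+1),
      ((n.choose j : ℂ) * (((K+1+j).ascFactorial (n-j) : ℕ) : ℂ))
        * ((((K+1:ℕ):ℂ) + 2*(n:ℕ) - ((n-j : ℕ) : ℂ)) * (V ^ ((n-j)+1) * F j) + V ^ (n-j) * F (j+1)))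
      = ∑ j ∈ Finset.range (n+1), (A j + B j) :=
        Finset.sum_congr rfl (fun j _ => by rw [hA, hB]; ring)
    _ = (∑ j ∈ Finset.range (n+1), A j) + ∑ j ∈ Finset.range (n+1), B j :=
        Finset.sum_add_distrib
    _ = ((∑ j ∈ Finset.range n, A (j+1)) + A 0) + ∑ j ∈ Finset.range (n+1), B j := by
        rw [Finset.sum_range_succ' A n]
    _ = A 0 + ((∑ j ∈ Finset.range (n+1), A (j+1)) + ∑ j ∈ Finset.range (n+1), B j) := by
        rw [Finset.sum_range_succ (fun j => A (j+1)) n, hAtop]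
        ring
    _ = A 0 + ∑ j ∈ Finset.range (n+1), (A (j+1) + B j) := by rw [Finset.sum_add_distrib]
    _ = G 0 + ∑ j ∈ Finset.range (n+1), G (j+1) := by
        rw [hA0, Finset.sum_congr rfl hkey]
    _ = ∑ j ∈ Finset.range (n+2), G j := by
        rw [Finset.sum_range_succ' G (n+1)]
        ring
    _ = _ := rfl

def NN (k n : ℕ) (f : ℂ → ℂ) : ℂ → ℂ := fun z =>
  ∑ j ∈ Finset.range (n+1),
    ((n.choose j : ℂ) * (((k+j).ascFactorial (n-j) : ℕ) : ℂ)) * (vv z ^ (n-j) * fder j f z)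

lemma NN_diffR {k n : ℕ} {f : ℂ → ℂ} (hf : DifferentiableOn ℂ f UHP) {τ : ℂ} (hτ : τ ∈ UHP) :
    DifferentiableAt ℝ (NN k n f) τ := by
  apply DifferentiableAt.fun_sum
  intro j _
  exact (((diff_vv hτ).pow _).mul (fder_diffR hf j hτ)).const_mul _

lemma Riter_diffR {k : ℕ} {n : ℕ} {f : ℂ → ℂ} (hf : DifferentiableOn ℂ f UHP)
    (hEq : ∀ σ ∈ UHP, Riter (k:ℤ) n f σ = NN k n f σ) {τ : ℂ} (hτ : τ ∈ UHP) :
    DifferentiableAt ℝ (Riter (k:ℤ) n f) τ := by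
  have hev : Riter (k:ℤ) n f =ᶠ[nhds τ] NN k n f :=
    Filter.eventuallyEq_of_mem (UHP_nhds hτ) hEq
  exact (Filter.EventuallyEq.differentiableAt_iff hev).mpr (NN_diffR hf hτ)

lemma Riter_eq {k : ℕ} (hk : 1 ≤ k) {f : ℂ → ℂ} (hf : DifferentiableOn ℂ f UHP) :
    ∀ n : ℕ, ∀ τ ∈ UHP, Riter (k:ℤ) n f τ = NN k n f τ := by
  intro n
  induction n with
  | zero =>
      intro τ hτ
      show f τ = _
      simp [NN, fder, iteratedDeriv_zero]
  | succ n ih =>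
      intro τ hτ
      show Rop ((k:ℤ) + 2 * (n:ℕ)) (Riter (k:ℤ) n f) τ = NN k (n+1) f τ
      rw [Rop_congr (Filter.eventuallyEq_of_mem (UHP_nhds hτ) (ih))]
      unfold NN
      rw [Rop_sum (fun j _ => (((diff_vv hτ).fun_pow _).fun_mul (fder_diffR hf j hτ)).const_mul _)]
      have hterm : ∀ j ∈ Finset.range (n+1),
          Rop ((k:ℤ) + 2 * (n:ℕ))
            (fun z => ((n.choose j : ℂ) * (((k+j).ascFactorial (n-j) : ℕ) : ℂ))
                * (vv z ^ (n-j) * fder j f z)) τ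
          = ((n.choose j : ℂ) * (((k+j).ascFactorial (n-j) : ℕ) : ℂ))
              * ((((k:ℂ) + 2*n) - ((n-j : ℕ) : ℂ)) * (vv τ ^ ((n-j)+1) * fder j f τ)
                 + vv τ ^ (n-j) * fder (j+1) f τ) := by
        intro j hj
        rw [Rop_const_mul _ (((diff_vv hτ).fun_pow _).fun_mul (fder_diffR hf j hτ))]
        rw [Rop_vh hτ _ _ (fder_diffC hf j hτ)]
        rw [deriv_fder j τ]
        push_cast
        ring
      rw [Finset.sum_congr rfl hterm]
      exact expand_step k n hk (vv τ) (fun j => fder j f τ)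

lemma alt_sum_complex (m : ℕ) :
    ∑ u ∈ Finset.range (m+1), (-1:ℂ)^u * (m.choose u : ℂ)
      = if m = 0 then 1 else 0 := by
  have h := Int.alternating_sum_range_choose (n := m)
  calc ∑ u ∈ Finset.range (m+1), (-1:ℂ)^u * (m.choose u : ℂ)
      = ((∑ u ∈ Finset.range (m+1), (-1:ℤ)^u * (m.choose u) : ℤ) : ℂ) := by
        push_cast; rfl
    _ = _ := by rw [h]; split <;> simp

lemma lemA_scalar (K L r : ℕ) (V : ℂ) (F G : ℕ → ℂ) :
    ∑ s ∈ Finset.range (r+1), (-1:ℂ)^s * ((K+r).choose s : ℂ) * ((L+r).choose (r-s) : ℂ) *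
      (∑ j ∈ Finset.range (r+1),
        ((r-s).choose j : ℂ) * (((K+1+j).ascFactorial (r-s-j) : ℕ) : ℂ) * (V^(r-s-j) * F j)) *
      (∑ i ∈ Finset.range (r+1),
        ((s).choose i : ℂ) * (((L+1+i).ascFactorial (s-i) : ℕ) : ℂ) * (V^(s-i) * G i))
    = ∑ s ∈ Finset.range (r+1),
        (-1:ℂ)^s * ((K+r).choose s : ℂ) * ((L+r).choose (r-s) : ℂ) * F (r-s) * G s := by
  set t : ℕ → ℕ → ℕ → ℂ := fun s j i =>
    (-1:ℂ)^s * ((K+r).choose s : ℂ) * ((L+r).choose (r-s) : ℂ) *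
      (((r-s).choose j : ℂ) * (((K+1+j).ascFactorial (r-s-j) : ℕ) : ℂ) * (V^(r-s-j) * F j)) *
      (((s).choose i : ℂ) * (((L+1+i).ascFactorial (s-i) : ℕ) : ℂ) * (V^(s-i) * G i)) with ht
  have hsplit : ∀ s ∈ Finset.range (r+1),
      (-1:ℂ)^s * ((K+r).choose s : ℂ) * ((L+r).choose (r-s) : ℂ) *
      (∑ j ∈ Finset.range (r+1),
        ((r-s).choose j : ℂ) * (((K+1+j).ascFactorial (r-s-j) : ℕ) : ℂ) * (V^(r-s-j) * F j)) *
      (∑ i ∈ Finset.range (r+1),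
        ((s).choose i : ℂ) * (((L+1+i).ascFactorial (s-i) : ℕ) : ℂ) * (V^(s-i) * G i))
      = ∑ i ∈ Finset.range (r+1), ∑ j ∈ Finset.range (r+1), t s j i := by
    intro s _
    simp only [Finset.mul_sum, Finset.sum_mul, ht]
  rw [Finset.sum_congr rfl hsplit]
  rw [Finset.sum_comm]
  have hswap2 : ∀ i ∈ Finset.range (r+1),
      ∑ s ∈ Finset.range (r+1), ∑ j ∈ Finset.range (r+1), t s j i
      = ∑ j ∈ Finset.range (r+1), ∑ s ∈ Finset.range (r+1), t s j i :=
    fun i _ => Finset.sum_comm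
  rw [Finset.sum_congr rfl hswap2]
  -- inner sum evaluation
  have inner : ∀ j ∈ Finset.range (r+1), ∀ i ∈ Finset.range (r+1),
      ∑ s ∈ Finset.range (r+1), t s j i
      = if j + i = r then
          (-1:ℂ)^i * ((K+r).choose i : ℂ) * ((L+r).choose j : ℂ) * F j * G i
        else 0 := by
    intro j hj i hi
    rw [Finset.mem_range] at hj hi
    rcases Nat.lt_or_ge r (j+i) with hlt | hge
    · rw [if_neg (by omega)]
      refine Finset.sum_eq_zero (fun s hs => ?_)
      rw [Finset.mem_range] at hs
      rw [ht]
      simp only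
      rcases Nat.lt_or_ge s i with hsi | hsi
      · rw [Nat.choose_eq_zero_of_lt hsi]
        simp
      · rw [Nat.choose_eq_zero_of_lt (show r - s < j by omega)]
        simp
    · obtain ⟨m, hm⟩ : ∃ m, r = j + i + m := ⟨r - j - i, by omega⟩
      have hzero : ∀ s ∈ Finset.range (r+1), s ∉ Finset.Ico i (i+m+1) → t s j i = 0 := by
        intro s hs hnot
        rw [Finset.mem_range] at hs
        rw [Finset.mem_Ico] at hnot
        push_neg at hnot
        rw [ht]
        simp only
        rcases Nat.lt_or_ge s i with hsi | hsi
        · rw [Nat.choose_eq_zero_of_lt hsi]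
          simp
        · have hge2 : i + m + 1 ≤ s := hnot hsi
          rw [Nat.choose_eq_zero_of_lt (show r - s < j by omega)]
          simp
      have hsub : Finset.Ico i (i+m+1) ⊆ Finset.range (r+1) := by
        intro x hx
        rw [Finset.mem_Ico] at hx
        rw [Finset.mem_range]
        omega
      rw [← Finset.sum_subset hsub hzero]
      rw [Finset.sum_Ico_eq_sum_range]
      rw [show i+m+1-i = m+1 by omega]
      have hfac : ((m.factorial : ℕ) : ℂ) ≠ 0 := by exact_mod_cast m.factorial_ne_zero
      apply mul_left_cancel₀ hfac
      rw [Finset.mul_sum]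
      have hterm : ∀ u ∈ Finset.range (m+1),
          ((m.factorial : ℕ):ℂ) * t (i+u) j i
          = ((-1:ℂ)^i * (((K+r).choose i : ℕ):ℂ) * (((L+r).choose j : ℕ):ℂ)
              * (((K+1+j).ascFactorial m : ℕ):ℂ) * (((L+1+i).ascFactorial m : ℕ):ℂ)
              * V^m * F j * G i) * ((-1:ℂ)^u * ((m.choose u : ℕ):ℂ)) := by
        intro u hu
        rw [Finset.mem_range] at hu
        obtain ⟨w, hw⟩ : ∃ w, m = u + w := ⟨m - u, by omega⟩
        subst hw
        rw [ht]
        simp only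
        rw [hm]
        rw [show j+i+(u+w) - (i+u) = j + w by omega,
            show j+w - j = w by omega,
            show i+u-i = u by omega,
            show K+(j+i+(u+w)) = K+j+i+u+w by omega,
            show L+(j+i+(u+w)) = L+j+i+u+w by omega]
        have hstar := congrArg (Nat.cast (R := ℂ)) (star_id K L j i u w)
        push_cast at hstar ⊢
        linear_combination ((-1:ℂ)^(i+u) * V^(u+w) * F j * G i) * hstar
      rw [Finset.sum_congr rfl hterm, ← Finset.mul_sum, alt_sum_complex m]
      by_cases hm0 : m = 0
      · subst hm0
        rw [if_pos rfl, if_pos (by omega)]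
        simp [Nat.ascFactorial_zero]
      · rw [if_neg hm0, if_neg (by omega)]
        simp
  rw [Finset.sum_congr rfl (fun i hi => Finset.sum_congr rfl (fun j hj => inner j hj i hi))]
  refine Finset.sum_congr rfl (fun i hi => ?_)
  rw [Finset.mem_range] at hi
  rw [Finset.sum_eq_single (r - i)]
  · rw [if_pos (by omega)]
  · intro b _ hb
    rw [if_neg (by omega)]
  · intro hmem
    exact absurd (Finset.mem_range.mpr (by omega)) hmem


lemma Riter_eq_ext {k : ℕ} (hk : 1 ≤ k) {f : ℂ → ℂ} (hf : DifferentiableOn ℂ f UHP)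
    {τ : ℂ} (hτ : τ ∈ UHP) {n N : ℕ} (hnN : n ≤ N) :
    Riter (k:ℤ) n f τ = ∑ j ∈ Finset.range (N+1),
      ((n.choose j : ℂ) * (((k+j).ascFactorial (n-j) : ℕ) : ℂ)) * (vv τ ^ (n-j) * fder j f τ) := by
  rw [Riter_eq hk hf n τ hτ]
  unfold NN
  apply Finset.sum_subset
  · intro x hx
    rw [Finset.mem_range] at *
    omega
  · intro j hj hj2
    rw [Finset.mem_range] at *
    rw [Nat.choose_eq_zero_of_lt (by omega)]
    simp

lemma lemA (K L r : ℕ) {f g : ℂ → ℂ} (hf : DifferentiableOn ℂ f UHP)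
    (hg : DifferentiableOn ℂ g UHP) {τ : ℂ} (hτ : τ ∈ UHP) :
    ∑ s ∈ Finset.range (r+1), (-1:ℂ)^s * (((K+r).choose s : ℕ) : ℂ)
        * (((L+r).choose (r-s) : ℕ) : ℂ)
        * (Riter ((K+1:ℕ):ℤ) (r-s) f τ * Riter ((L+1:ℕ):ℤ) s g τ)
      = RCbracket (K+1) (L+1) r f g τ := by
  calc ∑ s ∈ Finset.range (r+1), (-1:ℂ)^s * (((K+r).choose s : ℕ) : ℂ)
        * (((L+r).choose (r-s) : ℕ) : ℂ)
        * (Riter ((K+1:ℕ):ℤ) (r-s) f τ * Riter ((L+1:ℕ):ℤ) s g τ)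
      = ∑ s ∈ Finset.range (r+1), (-1:ℂ)^s * (((K+r).choose s : ℕ) : ℂ)
          * (((L+r).choose (r-s) : ℕ) : ℂ) *
        (∑ j ∈ Finset.range (r+1),
          (((r-s).choose j : ℕ) : ℂ) * (((K+1+j).ascFactorial (r-s-j) : ℕ) : ℂ)
            * (vv τ^(r-s-j) * fder j f τ)) *
        (∑ i ∈ Finset.range (r+1),
          ((s.choose i : ℕ) : ℂ) * (((L+1+i).ascFactorial (s-i) : ℕ) : ℂ)
            * (vv τ^(s-i) * fder i g τ)) := by
        refine Finset.sum_congr rfl (fun s hs => ?_)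
        rw [Finset.mem_range] at hs
        rw [Riter_eq_ext (by omega) hf hτ (show r - s ≤ r by omega),
            Riter_eq_ext (by omega) hg hτ (show s ≤ r by omega)]
        ring
    _ = ∑ s ∈ Finset.range (r+1), (-1:ℂ)^s * (((K+r).choose s : ℕ) : ℂ)
          * (((L+r).choose (r-s) : ℕ) : ℂ) * fder (r-s) f τ * fder s g τ :=
        lemA_scalar K L r (vv τ) (fun j => fder j f τ) (fun i => fder i g τ)
    _ = RCbracket (K+1) (L+1) r f g τ := by
        unfold RCbracket
        refine Finset.sum_congr rfl (fun s hs => ?_)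
        rw [show K+1+r-1 = K+r by omega, show L+1+r-1 = L+r by omega]

/-- for integers `k, l ≥ 1`, `r ≥ 1` there are rationals `b_0, …, b_{r−1}`
such that for all holomorphic `f, g` on `ℍ`:
`R_k^r(f)·g = C(k+l+2r−2,r)⁻¹·[f,g]_r + R_{k+l+2r−2}(Σ_{s<r} b_s R_k^s(f) R_l^{r−1−s}(g))`. -/
theorem stmt6 (k l r : ℕ) (hk : 1 ≤ k) (hl : 1 ≤ l) (hr : 1 ≤ r) :
    ∃ b : ℕ → ℚ,
      ∀ f g : ℂ → ℂ, DifferentiableOn ℂ f UHP → DifferentiableOn ℂ g UHP →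
        ∀ τ ∈ UHP,
          Riter (k : ℤ) r f τ * g τ
            = ((Nat.choose (k + l + 2 * r - 2) r : ℂ))⁻¹ * RCbracket k l r f g τ
              + Rop ((k : ℤ) + l + 2 * r - 2)
                  (fun z => ∑ s ∈ Finset.range r,
                    (b s : ℂ) * Riter (k : ℤ) s f z * Riter (l : ℤ) (r - 1 - s) g z) τ := by
  obtain ⟨K, rfl⟩ : ∃ K, k = K + 1 := ⟨k - 1, by omega⟩
  obtain ⟨L, rfl⟩ : ∃ L, l = L + 1 := ⟨l - 1, by omega⟩
  set cc : ℕ := (K + r + (L + r)).choose r with hcc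
  have hccpos : 0 < cc := Nat.choose_pos (by omega)
  have hccQ : ((cc : ℚ)) ≠ 0 := by
    exact_mod_cast hccpos.ne'
  have hVanN : cc = ∑ t ∈ Finset.range (r+1), (K+r).choose t * (L+r).choose (r-t) := by
    rw [hcc, Nat.add_choose_eq, Finset.Nat.sum_antidiagonal_eq_sum_range_succ_mk]
  have hVan : (cc : ℚ) = ∑ t ∈ Finset.range (r+1), ((K+r).choose t : ℚ) * ((L+r).choose (r-t) : ℚ) := by
    have := congrArg (Nat.cast (R := ℚ)) hVanN
    push_cast at this
    exact this
  set bb : ℕ → ℚ := fun a => (-1:ℚ)^(r-1-a) *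
    (1 - (∑ t ∈ Finset.range (r-a), ((K+r).choose t : ℚ) * ((L+r).choose (r-t) : ℚ)) / cc) with hbb
  have hcoef : ∀ a, a ≤ r →
      (if a = r then (1:ℚ) else 0)
        = (cc:ℚ)⁻¹ * (-1:ℚ)^(r-a) * ((K+r).choose (r-a) : ℚ) * ((L+r).choose a : ℚ)
          + (if a = 0 then 0 else bb (a-1)) + (if a = r then 0 else bb a) := by
    intro a ha
    have hInv : (cc:ℚ) * (cc:ℚ)⁻¹ = 1 := mul_inv_cancel₀ hccQ
    by_cases har : a = r
    · rw [har]
      rw [if_pos rfl, if_pos rfl, if_neg (by omega)]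
      rw [hbb]
      simp only
      rw [show r - 1 - (r - 1) = 0 by omega, show r - (r-1) = 1 by omega]
      rw [Finset.sum_range_one]
      rw [show r - r = 0 by omega, show r - 0 = r by omega]
      simp only [pow_zero, Nat.choose_zero_right, Nat.cast_one, one_mul]
      rw [div_eq_mul_inv]
      ring
    · rw [if_neg har, if_neg har]
      by_cases ha0 : a = 0
      · subst ha0
        rw [if_pos rfl]
        have hVan' : (cc : ℚ) = (∑ t ∈ Finset.range r, ((K+r).choose t : ℚ) * ((L+r).choose (r-t) : ℚ))
            + ((K+r).choose r : ℚ) * ((L+r).choose 0 : ℚ) := by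
          rw [hVan, Finset.sum_range_succ, show r - r = 0 by omega]
        have hsgn : (-1:ℚ)^r = -(-1:ℚ)^(r-1) := by
          conv_lhs => rw [show r = (r-1)+1 by omega]
          rw [pow_succ]
          ring
        rw [hbb]
        simp only
        rw [show r - 0 = r by omega, show r - 1 - 0 = r - 1 by omega, hsgn]
        rw [Nat.choose_zero_right] at hVan' ⊢
        rw [div_eq_mul_inv]
        push_cast at hVan' ⊢
        linear_combination (-(-1:ℚ)^(r-1) * (cc:ℚ)⁻¹) * hVan' + ((-1:ℚ)^(r-1)) * hInv
      · rw [if_neg ha0]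
        rw [hbb]
        simp only
        rw [show r - 1 - (a - 1) = r - a by omega, show r - (a - 1) = (r - a) + 1 by omega]
        rw [Finset.sum_range_succ, show r - (r - a) = a by omega]
        have hsgn2 : (-1:ℚ)^(r-1-a) = -(-1:ℚ)^(r-a) := by
          have h9 : (-1:ℚ)^(r-a) = -(-1:ℚ)^(r-1-a) := by
            conv_lhs => rw [show r - a = (r-1-a)+1 by omega]
            rw [pow_succ]
            ring
          rw [h9]
          ring
        rw [hsgn2, div_eq_mul_inv, div_eq_mul_inv]
        ring
  refine ⟨bb, ?_⟩
  intro f g hf hg τ hτ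
  have hRf : ∀ n : ℕ, DifferentiableAt ℝ (Riter ((K+1:ℕ):ℤ) n f) τ :=
    fun n => Riter_diffR hf (Riter_eq (by omega) hf n) hτ
  have hRg : ∀ n : ℕ, DifferentiableAt ℝ (Riter ((L+1:ℕ):ℤ) n g) τ :=
    fun n => Riter_diffR hg (Riter_eq (by omega) hg n) hτ
  set P : ℕ → ℂ := fun a => Riter ((K+1:ℕ):ℤ) a f τ * Riter ((L+1:ℕ):ℤ) (r-a) g τ with hP
  have hLHS : Riter ((K+1:ℕ):ℤ) r f τ * g τ = P r := by
    rw [hP]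
    simp only
    rw [show r - r = 0 by omega]
    rfl
  have hchoose_arg : (K+1) + (L+1) + 2*r - 2 = K + r + (L + r) := by omega
  have hRC : ((((K+1) + (L+1) + 2*r - 2).choose r : ℕ) : ℂ)⁻¹ * RCbracket (K+1) (L+1) r f g τ
      = ∑ a ∈ Finset.range (r+1),
          (((cc:ℕ):ℂ)⁻¹ * (-1:ℂ)^(r-a) * (((K+r).choose (r-a) : ℕ):ℂ)
            * (((L+r).choose a : ℕ):ℂ)) * P a := by
    rw [hchoose_arg, ← hcc, ← lemA K L r hf hg hτ, Finset.mul_sum]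
    rw [← Finset.sum_range_reflect]
    refine Finset.sum_congr rfl (fun a ha => ?_)
    rw [Finset.mem_range] at ha
    rw [show r + 1 - 1 - a = r - a by omega]
    rw [hP]
    simp only
    rw [show r - (r - a) = a by omega]
    ring
  have hlam : (fun z => ∑ a ∈ Finset.range r,
        ((bb a : ℚ):ℂ) * Riter ((K+1:ℕ):ℤ) a f z * Riter ((L+1:ℕ):ℤ) (r-1-a) g z)
      = (fun z => ∑ a ∈ Finset.range r,
        ((bb a : ℚ):ℂ) * (Riter ((K+1:ℕ):ℤ) a f z * Riter ((L+1:ℕ):ℤ) (r-1-a) g z)) := by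
    funext z
    exact Finset.sum_congr rfl (fun a _ => by ring)
  have hRop : Rop (((K+1:ℕ):ℤ) + ((L+1:ℕ)) + 2*(r:ℕ) - 2)
      (fun z => ∑ a ∈ Finset.range r,
        ((bb a : ℚ):ℂ) * Riter ((K+1:ℕ):ℤ) a f z * Riter ((L+1:ℕ):ℤ) (r-1-a) g z) τ
      = ∑ a ∈ Finset.range r, ((bb a : ℚ):ℂ) * (P (a+1) + P a) := by
    rw [hlam]
    rw [Rop_sum (fun a _ => ((hRf a).fun_mul (hRg (r-1-a))).const_mul _)]
    refine Finset.sum_congr rfl (fun a ha => ?_)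
    rw [Finset.mem_range] at ha
    rw [Rop_const_mul _ ((hRf a).fun_mul (hRg (r-1-a)))]
    rw [show ((K+1:ℕ):ℤ) + ((L+1:ℕ)) + 2*(r:ℕ) - 2
        = (((K+1:ℕ):ℤ) + 2*(a:ℕ)) + (((L+1:ℕ):ℤ) + 2*((r-1-a:ℕ):ℤ)) by push_cast; omega]
    rw [Rop_mul _ _ (hRf a) (hRg (r-1-a))]
    have e1 : Rop (((K+1:ℕ):ℤ) + 2*(a:ℕ)) (Riter ((K+1:ℕ):ℤ) a f) τ
        = Riter ((K+1:ℕ):ℤ) (a+1) f τ := rfl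
    have e2 : Rop (((L+1:ℕ):ℤ) + 2*((r-1-a:ℕ):ℤ)) (Riter ((L+1:ℕ):ℤ) (r-1-a) g) τ
        = Riter ((L+1:ℕ):ℤ) (r-a) g τ := by
      rw [show r - a = (r-1-a)+1 by omega]
      rfl
    rw [e1, e2]
    rw [hP]
    simp only
    rw [show r - (a+1) = r-1-a by omega]
  rw [hLHS, hRC, hRop]
  have hsplit2 : ∑ a ∈ Finset.range r, ((bb a : ℚ):ℂ) * (P (a+1) + P a)
      = (∑ a ∈ Finset.range (r+1), (if a = 0 then 0 else ((bb (a-1) : ℚ):ℂ)) * P a)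
        + ∑ a ∈ Finset.range (r+1), (if a = r then 0 else ((bb a : ℚ):ℂ)) * P a := by
    rw [Finset.sum_range_succ' (fun a => (if a = 0 then 0 else ((bb (a-1) : ℚ):ℂ)) * P a) r]
    rw [Finset.sum_range_succ (fun a => (if a = r then 0 else ((bb a : ℚ):ℂ)) * P a) r]
    rw [if_pos rfl, if_pos rfl]
    simp only [Nat.succ_ne_zero, if_false, Nat.add_sub_cancel, zero_mul, add_zero]
    rw [← Finset.sum_add_distrib]
    refine Finset.sum_congr rfl (fun a ha => ?_)
    rw [Finset.mem_range] at ha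
    rw [if_neg (by omega)]
    ring
  have hPr : P r = ∑ a ∈ Finset.range (r+1), (if a = r then (1:ℂ) else 0) * P a := by
    have h1 : ∀ a ∈ Finset.range (r+1),
        (if a = r then (1:ℂ) else 0) * P a = (if a = r then P a else 0) := by
      intro a _
      split <;> simp
    rw [Finset.sum_congr rfl h1, Finset.sum_ite_eq' (Finset.range (r+1)) r P,
        if_pos (Finset.mem_range.mpr (by omega))]
  rw [hsplit2, hPr, ← add_assoc, ← Finset.sum_add_distrib, ← Finset.sum_add_distrib]
  refine Finset.sum_congr rfl (fun a ha => ?_)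
  rw [Finset.mem_range] at ha
  have hc := hcoef a (by omega)
  have hcC := congrArg (fun q : ℚ => (q : ℂ)) hc
  push_cast at hcC
  simp only [apply_ite (fun q : ℚ => (q : ℂ))] at hcC
  push_cast at hcC
  linear_combination (P a) * hcC
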